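/- If f : V ⊆ ℝ^m → ℝ is (A_f, B_f, C)-mild up to order r and g : U ⊆ ℝ^m → V is (A_g, B_g, C)-mild up to order r (componentwise), then the composition f ∘ g is (Ã, B_f, C)-mild up to order r, where Ã = A_g·(m·B_g·A_f + 1)^{1+C}. -/

import Mathlib

/-- Iterated directional (partial) derivative in coordinate `i`. -/
noncomputable def pd {m : ℕ} (i : Fin m) (f : (Fin m → ℝ) → ℝ) : (Fin m → ℝ) → ℝ :=
  fun x => deriv (fun t => f (Function.update x i t)) (x i)

/-- The partial derivative of multi-order `ν`. -/
noncomputable def mDeriv {m : ℕ} (ν : Fin m → ℕ) (f : (Fin m → ℝ) → ℝ) :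
    (Fin m → ℝ) → ℝ :=
  (List.finRange m).foldr (fun i g => (pd i)^[ν i] g) f

/-- `f` is `(A,B,C)`-mild up to order `r` on `U`. -/
def IsMildUpTo {m : ℕ} (U : Set (Fin m → ℝ)) (f : (Fin m → ℝ) → ℝ)
    (A B C : ℝ) (r : ℕ∞) : Prop :=
  ContDiffOn ℝ r f U ∧ ∀ ν : Fin m → ℕ, ((∑ i, ν i : ℕ) : ℕ∞) ≤ r → ∀ x ∈ U,
    |mDeriv ν f x| ≤ B * A ^ (∑ i, ν i) * ((Nat.factorial (∑ i, ν i) : ℝ)) ^ (1 + C)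

namespace MildComp


open Finset OrderedFinpartition

/-- Weight of an ordered finpartition. -/
def W {n : ℕ} (c : OrderedFinpartition n) : ℕ :=
  (Nat.factorial c.length) * ∏ i, Nat.factorial (c.partSize i)

lemma sum_partSize {n : ℕ} (c : OrderedFinpartition n) : ∑ i, c.partSize i = n := by
  classical
  have := Fintype.card_congr c.equivSigma
  simpa [Fintype.card_sigma] using this

lemma one_le_W {n : ℕ} (c : OrderedFinpartition n) : 1 ≤ W c := by
  have h2 : 0 < ∏ i, Nat.factorial (c.partSize i) :=
    Finset.prod_pos (fun i _ => Nat.factorial_pos _)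
  have h1 : 0 < Nat.factorial c.length := Nat.factorial_pos _
  exact Nat.one_le_iff_ne_zero.2 (Nat.mul_pos h1 h2).ne'

lemma W_extendLeft {n : ℕ} (c : OrderedFinpartition n) :
    W c.extendLeft = (c.length + 1) * W c := by
  have h0 : W c.extendLeft = Nat.factorial (c.length + 1) *
      ∏ i : Fin (c.length + 1),
        Nat.factorial ((Fin.cons 1 c.partSize : Fin (c.length+1) → ℕ) i) := rfl
  rw [h0, Fin.prod_univ_succ]
  simp only [Fin.cons_zero, Fin.cons_succ, Nat.factorial_one, Nat.factorial_zero, one_mul,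
    Nat.factorial_succ, W]
  ring

lemma W_extendMiddle {n : ℕ} (c : OrderedFinpartition n) (k : Fin c.length) :
    W (c.extendMiddle k) = (c.partSize k + 1) * W c := by
  have h0 : W (c.extendMiddle k) = (Nat.factorial c.length) *
      (∏ i, Nat.factorial (Function.update c.partSize k (c.partSize k + 1) i)) := rfl
  have h1 : (fun i => Nat.factorial (Function.update c.partSize k (c.partSize k + 1) i))
      = Function.update (fun j => Nat.factorial (c.partSize j)) k
          (Nat.factorial (c.partSize k + 1)) := by
    funext i
    exact Function.apply_update (fun _ x => Nat.factorial x) c.partSize k (c.partSize k + 1) i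
  rw [h0, show (∏ i, Nat.factorial (Function.update c.partSize k (c.partSize k + 1) i))
      = ∏ i, Function.update (fun j => Nat.factorial (c.partSize j)) k
          (Nat.factorial (c.partSize k + 1)) i from by rw [h1]]
  rw [Finset.prod_update_of_mem (Finset.mem_univ k)]
  rw [W, ← Finset.mul_prod_erase Finset.univ _ (Finset.mem_univ k), Finset.erase_eq]
  rw [Nat.factorial_succ]
  ring

lemma W_zero (c : OrderedFinpartition 0) : W c = 1 := by
  have hlen : c.length = 0 := Nat.le_zero.mp c.length_le
  have h2 : (∏ i : Fin c.length, Nat.factorial (c.partSize i)) = 1 := by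
    haveI : IsEmpty (Fin c.length) := by rw [hlen]; infer_instance
    rw [Finset.univ_eq_empty, Finset.prod_empty]
  rw [W, h2, hlen]
  simp

lemma W_le_factorial {n : ℕ} (c : OrderedFinpartition n) : W c ≤ Nat.factorial n := by
  induction n with
  | zero => simp [W_zero c]
  | succ n ih =>
    obtain ⟨⟨c', o⟩, rfl⟩ := (OrderedFinpartition.extendEquiv n).surjective c
    match o with
    | none =>
      show W c'.extendLeft ≤ _
      rw [W_extendLeft, Nat.factorial_succ]
      exact Nat.mul_le_mul (by have := c'.length_le; omega) (ih c')
    | some i =>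
      show W (c'.extendMiddle i) ≤ _
      rw [W_extendMiddle, Nat.factorial_succ]
      exact Nat.mul_le_mul (by have := c'.partSize_le i; omega) (ih c')

/-- Sum of weights over partitions with `k` parts. -/
noncomputable def S (n k : ℕ) : ℕ :=
  ∑ c : OrderedFinpartition n, if c.length = k then W c else 0

lemma length_zero {c : OrderedFinpartition 0} : c.length = 0 := Nat.le_zero.mp c.length_le

lemma S_zero (k : ℕ) : S 0 k = if k = 0 then 1 else 0 := by
  rw [S, Fintype.sum_unique]
  rcases eq_or_ne k 0 with rfl | hk
  · simp [length_zero, W_zero]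
  · simp [length_zero, W_zero, Ne.symm hk, hk]

lemma S_pos_zero {n : ℕ} (hn : 0 < n) : S n 0 = 0 := by
  rw [S]
  refine Finset.sum_eq_zero fun c _ => ?_
  rw [if_neg (c.length_pos hn).ne']

lemma S_succ (n k : ℕ) : S (n+1) k = k * S n (k-1) + (n + k) * S n k := by
  classical
  have h := Equiv.sum_comp (OrderedFinpartition.extendEquiv n)
    (fun c : OrderedFinpartition (n+1) => if c.length = k then W c else 0)
  rw [S, ← h, ← Finset.univ_sigma_univ, Finset.sum_sigma]
  have hterm : ∀ c : OrderedFinpartition n,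
      (∑ o : Option (Fin c.length),
        (if ((OrderedFinpartition.extendEquiv n) ⟨c, o⟩).length = k
          then W ((OrderedFinpartition.extendEquiv n) ⟨c, o⟩) else 0))
      = (if c.length + 1 = k then (c.length + 1) * W c else 0)
        + (if c.length = k then (n + c.length) * W c else 0) := by
    intro c
    rw [Fintype.sum_option]
    congr 1
    · show (if c.extendLeft.length = k then W c.extendLeft else 0) = _
      have hlen : c.extendLeft.length = c.length + 1 := rfl
      rw [hlen]
      by_cases h : c.length + 1 = k
      · rw [if_pos h, if_pos h, W_extendLeft]
      · rw [if_neg h, if_neg h]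
    · show (∑ i : Fin c.length,
          (if (c.extendMiddle i).length = k then W (c.extendMiddle i) else 0)) = _
      by_cases h : c.length = k
      · simp only [if_pos h]
        have heq : ∀ i : Fin c.length, W (c.extendMiddle i) = (c.partSize i + 1) * W c :=
          W_extendMiddle c
        show (∑ i : Fin c.length, (if (c.extendMiddle i).length = k
            then W (c.extendMiddle i) else 0)) = _
        have : ∀ i : Fin c.length, (c.extendMiddle i).length = c.length := fun _ => rfl
        rw [Finset.sum_congr rfl (fun i _ => by rw [this i, if_pos h, heq i])]
        rw [← Finset.sum_mul]
        congr 1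
        rw [Finset.sum_add_distrib, sum_partSize]
        simp [Finset.card_univ]
      · have : ∀ i : Fin c.length, (c.extendMiddle i).length = c.length := fun _ => rfl
        rw [Finset.sum_congr rfl (fun i _ => by rw [this i, if_neg h]), if_neg h]
        simp
  rw [Finset.sum_congr rfl (fun c _ => hterm c), Finset.sum_add_distrib]
  congr 1
  · rcases k with _ | j
    · simp
    · rw [Nat.add_sub_cancel, S, Finset.mul_sum]
      refine Finset.sum_congr rfl fun c _ => ?_
      by_cases h : c.length = j
      · rw [if_pos (by omega), if_pos h, h]
      · rw [if_neg (by omega), if_neg h, mul_zero]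
  · rw [S, Finset.mul_sum]
    refine Finset.sum_congr rfl fun c _ => ?_
    by_cases h : c.length = k
    · rw [if_pos h, if_pos h, h]
    · rw [if_neg h, if_neg h, mul_zero]

lemma S_le (n : ℕ) : ∀ k, S n k ≤ Nat.factorial n * Nat.choose (n-1) (k-1) := by
  induction n with
  | zero =>
    intro k
    rw [S_zero]
    rcases k with _ | k <;> simp
  | succ n ih =>
    intro k
    rcases k with _ | k
    · rw [S_pos_zero (Nat.succ_pos n)]; exact Nat.zero_le _
    rcases k with _ | j
    · -- k = 1
      rw [S_succ]
      rcases n with _ | n'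
      · simp [S_zero]
      · rw [S_pos_zero (Nat.succ_pos n')]
        have h1 : S (n'+1) 1 ≤ (n'+1).factorial := by
          have := ih 1
          simpa using this
        have h2 : (1:ℕ) * 0 + (n'+1+1) * S (n'+1) 1 ≤ (n'+1+1) * (n'+1).factorial := by
          have := Nat.mul_le_mul_left (n'+1+1) h1
          omega
        refine h2.trans (le_of_eq ?_)
        simp [Nat.factorial_succ]
    · -- k = j + 2
      rw [S_succ]
      rcases n with _ | i
      · simp [S_zero]
      · have hA := ih (j+1)
        have hB := ih (j+2)
        simp only [Nat.add_sub_cancel] at hA hB ⊢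
        set a := Nat.choose i j with ha
        set b := Nat.choose i (j+1) with hb
        have hP : Nat.choose (i+1) (j+1) = a + b := Nat.choose_succ_succ i j
        have key : (j+2) * S (i+1) (j+1) + (i + 1 + (j+2)) * S (i+1) (j+2)
            ≤ (j+2) * ((i+1).factorial * a) + (i+1+(j+2)) * ((i+1).factorial * b) :=
          Nat.add_le_add (Nat.mul_le_mul_left _ hA) (Nat.mul_le_mul_left _ hB)
        refine key.trans ?_
        rw [hP, Nat.factorial_succ]
        have hinner : (j+2) * a + (i+j+3) * b ≤ (i+2) * (a+b) := by
          rcases le_or_gt j i with hj | hj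
          · have h1 : b * (j+1) = a * (i-j) := Nat.choose_succ_right_eq i j
            have h3 : (i+j+3) * b = (i+2) * b + b * (j+1) := by ring
            rw [h3, h1]
            have h2 : j + 2 + (i - j) = i + 2 := by omega
            calc (j+2)*a + ((i+2)*b + a*(i-j)) = ((j+2) + (i-j))*a + (i+2)*b := by ring
              _ = (i+2)*a + (i+2)*b := by rw [h2]
              _ ≤ (i+2)*(a+b) := le_of_eq (by ring)
          · have hb0 : b = 0 := Nat.choose_eq_zero_of_lt (by omega)
            have ha0 : a = 0 := Nat.choose_eq_zero_of_lt hj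
            simp [ha0, hb0]
        calc (j+2) * ((i+1).factorial * a) + (i+1+(j+2)) * ((i+1).factorial * b)
            = (i+1).factorial * ((j+2)*a + (i+j+3)*b) := by ring
          _ ≤ (i+1).factorial * ((i+2)*(a+b)) := Nat.mul_le_mul_left _ hinner
          _ = (i+1+1) * (i+1).factorial * (a+b) := by ring

lemma sum_W_le (n : ℕ) {t : ℝ} (ht : 0 ≤ t) :
    ∑ c : OrderedFinpartition n, t ^ c.length * (W c : ℝ)
      ≤ (Nat.factorial n : ℝ) * (1+t)^n := by
  classical
  have cast_S : ∀ k, (S n k : ℝ)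
      = ∑ c : OrderedFinpartition n, (if c.length = k then (W c : ℝ) else 0) := by
    intro k
    rw [S, Nat.cast_sum]
    exact Finset.sum_congr rfl fun c _ => by split <;> simp
  have step1 : ∑ c : OrderedFinpartition n, t ^ c.length * (W c : ℝ)
      = ∑ k ∈ Finset.range (n+1), t^k * (S n k : ℝ) := by
    symm
    calc ∑ k ∈ Finset.range (n+1), t^k * (S n k : ℝ)
        = ∑ k ∈ Finset.range (n+1), ∑ c : OrderedFinpartition n,
            (if c.length = k then t ^ k * (W c : ℝ) else 0) := by
          refine Finset.sum_congr rfl fun k _ => ?_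
          rw [cast_S, Finset.mul_sum]
          exact Finset.sum_congr rfl fun c _ => by split <;> simp
      _ = ∑ c : OrderedFinpartition n, ∑ k ∈ Finset.range (n+1),
            (if c.length = k then t ^ k * (W c : ℝ) else 0) := Finset.sum_comm
      _ = ∑ c : OrderedFinpartition n, t ^ c.length * (W c : ℝ) := by
          refine Finset.sum_congr rfl fun c _ => ?_
          rw [Finset.sum_ite_eq (Finset.range (n+1)) c.length (fun k => t ^ k * (W c : ℝ))]
          exact if_pos (Finset.mem_range.2 (by have := c.length_le; omega))
  rw [step1]
  have step2 : ∑ k ∈ Finset.range (n+1), t^k * (S n k : ℝ)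
      ≤ ∑ k ∈ Finset.range (n+1),
          t^k * ((Nat.factorial n : ℝ) * (Nat.choose (n-1) (k-1) : ℝ)) := by
    refine Finset.sum_le_sum fun k _ => ?_
    refine mul_le_mul_of_nonneg_left ?_ (pow_nonneg ht k)
    exact_mod_cast S_le n k
  refine step2.trans ?_
  have step3 : ∑ k ∈ Finset.range (n+1),
        t^k * ((Nat.factorial n : ℝ) * (Nat.choose (n-1) (k-1) : ℝ))
      = (Nat.factorial n : ℝ)
        * ∑ k ∈ Finset.range (n+1), t^k * (Nat.choose (n-1) (k-1) : ℝ) := by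
    rw [Finset.mul_sum]; exact Finset.sum_congr rfl fun k _ => by ring
  rw [step3]
  refine mul_le_mul_of_nonneg_left ?_ (by positivity)
  rw [Finset.sum_range_succ']
  simp only [pow_zero, Nat.zero_sub, Nat.choose_zero_right, Nat.cast_one, mul_one, one_mul]
  rcases n with _ | p
  · simp
  · have hexp : ∑ k ∈ Finset.range (p+1), t^(k+1) * (Nat.choose (p+1-1) (k+1-1) : ℝ)
        = t * (t+1)^p := by
      have hpow := add_pow t (1:ℝ) p
      simp only [one_pow, mul_one] at hpow
      have : ∀ k ∈ Finset.range (p+1), t^(k+1) * (Nat.choose (p+1-1) (k+1-1) : ℝ)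
          = t * (t^k * (Nat.choose p k : ℝ)) := by
        intro k _
        simp only [Nat.add_sub_cancel]
        ring
      rw [Finset.sum_congr rfl this, ← Finset.mul_sum, ← hpow]
    rw [hexp]
    have h1 : (1:ℝ) ≤ (1+t)^p := one_le_pow₀ (by linarith)
    have h2 : (1+t)^(p+1) = (1+t)^p + t * (1+t)^p := by ring
    rw [h2, add_comm t 1]
    nlinarith [pow_nonneg (by linarith : (0:ℝ) ≤ 1+t) p]


section Calculus

variable {m : ℕ}




/-- Iterated partial derivatives along a list of coordinates. -/
noncomputable def pdList (l : List (Fin m)) (f : (Fin m → ℝ) → ℝ) : (Fin m → ℝ) → ℝ :=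
  l.foldr (fun i g => pd i g) f

@[simp] lemma pdList_nil (f : (Fin m → ℝ) → ℝ) : pdList ([] : List (Fin m)) f = f := rfl

@[simp] lemma pdList_cons (i : Fin m) (l : List (Fin m)) (f : (Fin m → ℝ) → ℝ) :
    pdList (i :: l) f = pd i (pdList l f) := rfl

lemma pdList_append (l₁ l₂ : List (Fin m)) (f : (Fin m → ℝ) → ℝ) :
    pdList (l₁ ++ l₂) f = pdList l₁ (pdList l₂ f) := by
  simp [pdList, List.foldr_append]

lemma pd_iterate (i : Fin m) (k : ℕ) (f : (Fin m → ℝ) → ℝ) :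
    (pd i)^[k] f = pdList (List.replicate k i) f := by
  induction k with
  | zero => rfl
  | succ k ih => rw [Function.iterate_succ_apply', ih]; rfl

/-- The canonical (sorted) list associated to a multi-index. -/
def canon (ν : Fin m → ℕ) : List (Fin m) :=
  (List.finRange m).flatMap fun i => List.replicate (ν i) i

lemma mDeriv_eq_pdList (ν : Fin m → ℕ) (f : (Fin m → ℝ) → ℝ) :
    mDeriv ν f = pdList (canon ν) f := by
  have key : ∀ l : List (Fin m), l.foldr (fun i g => (pd i)^[ν i] g) f
      = pdList (l.flatMap fun i => List.replicate (ν i) i) f := by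
    intro l
    induction l with
    | nil => rfl
    | cons a l ih =>
        rw [List.foldr_cons, List.flatMap_cons, pdList_append, ih, pd_iterate]
  exact key _

lemma length_canon (ν : Fin m → ℕ) : (canon ν).length = ∑ i, ν i := by
  rw [canon, List.length_flatMap]
  rw [Fin.sum_univ_def]
  congr 1
  exact List.map_congr_left fun i _ => by simp

lemma count_canon (ν : Fin m → ℕ) (j : Fin m) : (canon ν).count j = ν j := by
  classical
  rw [canon, List.count_flatMap]
  have : ((List.finRange m).map fun i => (List.replicate (ν i) i).count j).sum
      = ∑ i, (List.replicate (ν i) i).count j := (Fin.sum_univ_def _).symm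
  rw [show ((List.finRange m).map (List.count j ∘ fun i => List.replicate (ν i) i)).sum
      = ∑ i, (List.replicate (ν i) i).count j from (Fin.sum_univ_def _).symm]
  rw [Finset.sum_congr rfl (fun i _ => List.count_replicate (a := j) (b := i) (n := ν i))]
  simp [Finset.sum_ite_eq]

lemma sum_count (l : List (Fin m)) : ∑ j, l.count j = l.length := by
  induction l with
  | nil => simp
  | cons a l ih =>
      simp only [List.count_cons, List.length_cons]
      rw [Finset.sum_add_distrib, ih]
      congr 1
      simp [Finset.sum_ite_eq]

lemma canon_perm (l : List (Fin m)) : (canon (fun i => l.count i)).Perm l := by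
  classical
  rw [List.perm_iff_count]
  intro a
  rw [count_canon]





variable {U : Set (Fin m → ℝ)}

lemma update_eq_affine (x : Fin m → ℝ) (i : Fin m) :
    (fun s : ℝ => Function.update x i s)
      = fun s => x + (s - x i) • (Pi.single i (1:ℝ) : Fin m → ℝ) := by
  funext s; funext j
  rcases eq_or_ne j i with rfl | hj
  · simp
  · simp [Function.update_of_ne hj, Pi.single_eq_of_ne hj]

lemma hasDerivAt_update (x : Fin m → ℝ) (i : Fin m) (t : ℝ) :
    HasDerivAt (fun s => Function.update x i s) (Pi.single i 1) t := by
  rw [update_eq_affine x i]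
  have h := (((hasDerivAt_id t).sub_const (x i)).smul_const
    (Pi.single i (1:ℝ) : Fin m → ℝ)).const_add x
  simpa using h

/-- Evaluation of a continuous linear map at a fixed vector, as a CLM. -/
noncomputable def evalCLM (w : Fin m → ℝ) : ((Fin m → ℝ) →L[ℝ] ℝ) →L[ℝ] ℝ :=
  ContinuousLinearMap.apply ℝ ℝ w

@[simp] lemma evalCLM_apply (w : Fin m → ℝ) (A : (Fin m → ℝ) →L[ℝ] ℝ) :
    evalCLM w A = A w := rfl

lemma pd_eq_fderiv {F : (Fin m → ℝ) → ℝ} {x : Fin m → ℝ} (i : Fin m)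
    (hF : DifferentiableAt ℝ F x) : pd i F x = fderiv ℝ F x (Pi.single i 1) := by
  have hx' : Function.update x i (x i) = x := Function.update_eq_self i x
  have h2 : HasFDerivAt F (fderiv ℝ F x) (Function.update x i (x i)) := by
    rw [hx']; exact hF.hasFDerivAt
  have h1 := h2.comp_hasDerivAt (x i) (hasDerivAt_update x i (x i))
  exact h1.deriv

lemma eventuallyEq_comp_update {F G : (Fin m → ℝ) → ℝ} (hU : IsOpen U) {x : Fin m → ℝ}
    (hx : x ∈ U) (h : Set.EqOn F G U) (i : Fin m) :
    (fun t => F (Function.update x i t)) =ᶠ[nhds (x i)] fun t => G (Function.update x i t) := by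
  have hc : Continuous (fun t : ℝ => Function.update x i t) := by
    rw [update_eq_affine x i]; fun_prop
  have hmem : (fun t : ℝ => Function.update x i t) ⁻¹' U ∈ nhds (x i) := by
    apply hc.continuousAt.preimage_mem_nhds
    rw [Function.update_eq_self i x]
    exact hU.mem_nhds hx
  filter_upwards [hmem] with t ht
  exact h ht

lemma pd_eqOn {F G : (Fin m → ℝ) → ℝ} (hU : IsOpen U) (h : Set.EqOn F G U) (i : Fin m) :
    Set.EqOn (pd i F) (pd i G) U := fun x hx =>
  Filter.EventuallyEq.deriv_eq (eventuallyEq_comp_update hU hx h i)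

lemma taylor_pdList {N : WithTop ℕ∞} {h : (Fin m → ℝ) → ℝ}
    {p : (Fin m → ℝ) → FormalMultilinearSeries ℝ (Fin m → ℝ) ℝ}
    (hU : IsOpen U) (hp : HasFTaylorSeriesUpToOn N h p U) :
    ∀ (k : ℕ) (a : Fin k → Fin m), (k : WithTop ℕ∞) ≤ N → ∀ x ∈ U,
      pdList (List.ofFn a) h x = p x k (fun j => Pi.single (a j) 1) := by
  intro k
  induction k with
  | zero =>
    intro a _ x hx
    have h0 := hp.zero_eq x hx
    rw [List.ofFn_zero, pdList_nil, ← h0, ContinuousMultilinearMap.curry0_apply]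
    congr 1
    exact Subsingleton.elim _ _
  | succ k ih =>
    intro a hk x hx
    have hk' : (k : WithTop ℕ∞) ≤ N :=
      le_trans (by exact_mod_cast Nat.le_succ k) hk
    have hklt : ((k : ℕ∞) : WithTop ℕ∞) < N := by
      refine lt_of_lt_of_le ?_ hk
      exact_mod_cast Nat.lt_succ_self k
    set v : Fin k → (Fin m → ℝ) := fun j => Pi.single (a j.succ) (1:ℝ) with hv
    have hinner : Set.EqOn (pdList (List.ofFn (fun j : Fin k => a j.succ)) h)
        (fun y => p y k v) U := fun y hy => ih (fun j => a j.succ) hk' y hy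
    rw [List.ofFn_succ, pdList_cons]
    have heq := pd_eqOn hU hinner (a 0) hx
    rw [heq]
    have hd : HasFDerivAt (fun y => p y k v)
        (((p x (k+1)).curryLeft).flipMultilinear v) x :=
      ((hp.fderivWithin k hklt x hx).hasFDerivAt (hU.mem_nhds hx)).continuousMultilinear_apply_const v
    rw [pd_eq_fderiv (a 0) hd.differentiableAt, hd.fderiv]
    show (p x (k+1)).curryLeft (Pi.single (a 0) 1) v = _
    rw [ContinuousMultilinearMap.curryLeft_apply]
    congr 1
    funext j
    refine Fin.cases ?_ (fun j' => ?_) j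
    · simp
    · simp [hv]

lemma pd_contDiffOn {N : WithTop ℕ∞} {F : (Fin m → ℝ) → ℝ} (hU : IsOpen U)
    (hF : ContDiffOn ℝ N F U) (i : Fin m) (k : ℕ) (hk : (k : WithTop ℕ∞) + 1 ≤ N) :
    ContDiffOn ℝ k (pd i F) U := by
  have hF' : ContDiffOn ℝ ((k : WithTop ℕ∞) + 1) F U := hF.of_le hk
  rw [contDiffOn_succ_iff_fderiv_of_isOpen hU] at hF'
  have hdiff := hF'.1
  have hfd := hF'.2.2
  have heq : Set.EqOn (pd i F) (fun y => fderiv ℝ F y (Pi.single i 1)) U := fun y hy =>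
    pd_eq_fderiv i ((hdiff y hy).differentiableAt (hU.mem_nhds hy))
  refine ContDiffOn.congr ?_ heq
  exact (evalCLM (Pi.single i (1:ℝ))).contDiff.comp_contDiffOn hfd

lemma pdList_contDiffOn {N : WithTop ℕ∞} {F : (Fin m → ℝ) → ℝ} (hU : IsOpen U)
    (hF : ContDiffOn ℝ N F U) (l : List (Fin m)) (k : ℕ)
    (hk : ((k + l.length : ℕ) : WithTop ℕ∞) ≤ N) :
    ContDiffOn ℝ k (pdList l F) U := by
  induction l generalizing k with
  | nil =>
    refine hF.of_le ?_
    refine le_trans ?_ hk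
    exact_mod_cast Nat.le_add_right k 0
  | cons i l ih =>
    have hstep : ContDiffOn ℝ (k+1 : ℕ) (pdList l F) U := by
      refine ih (k+1) (le_trans ?_ hk)
      exact_mod_cast le_of_eq (by simp; omega)
    rw [pdList_cons]
    refine pd_contDiffOn hU hstep i k ?_
    exact_mod_cast le_refl ((k+1 : ℕ) : WithTop ℕ∞)

lemma pd_comm {F : (Fin m → ℝ) → ℝ} (hU : IsOpen U) (hF : ContDiffOn ℝ 2 F U) (i j : Fin m) :
    Set.EqOn (pd i (pd j F)) (pd j (pd i F)) U := by
  have key : ∀ u v : Fin m, ∀ x ∈ U, pd u (pd v F) x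
      = fderiv ℝ (fderiv ℝ F) x (Pi.single u 1) (Pi.single v 1) := by
    intro u v x hx
    have hdiffF : ∀ y ∈ U, DifferentiableAt ℝ F y := fun y hy =>
      (hF.differentiableOn (by norm_num)).differentiableAt (hU.mem_nhds hy)
    have hEq : Set.EqOn (pd v F) (fun y => fderiv ℝ F y (Pi.single v 1)) U :=
      fun y hy => pd_eq_fderiv v (hdiffF y hy)
    rw [pd_eqOn hU hEq u hx]
    have hfd : ContDiffAt ℝ 1 (fderiv ℝ F) x :=
      (hF.contDiffAt (hU.mem_nhds hx)).fderiv_right (le_refl _)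
    have hd2 : DifferentiableAt ℝ (fderiv ℝ F) x := hfd.differentiableAt (by norm_num)
    have hd : HasFDerivAt (fun y => fderiv ℝ F y (Pi.single v 1))
        ((evalCLM (Pi.single v (1:ℝ))).comp (fderiv ℝ (fderiv ℝ F) x)) x := by
      have h' := (evalCLM (m := m) (Pi.single v (1:ℝ))).hasFDerivAt.comp x hd2.hasFDerivAt
      exact h'
    rw [pd_eq_fderiv u hd.differentiableAt, hd.fderiv]
    rfl
  intro x hx
  have hsym : IsSymmSndFDerivAt ℝ F x :=
    (hF.contDiffAt (hU.mem_nhds hx)).isSymmSndFDerivAt (by simp)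
  rw [key i j x hx, key j i x hx]
  exact hsym.eq _ _

lemma pdList_perm {N : WithTop ℕ∞} {F : (Fin m → ℝ) → ℝ} (hU : IsOpen U)
    (hF : ContDiffOn ℝ N F U) {l₁ l₂ : List (Fin m)} (hp : l₁.Perm l₂) :
    ((l₁.length : ℕ) : WithTop ℕ∞) ≤ N → Set.EqOn (pdList l₁ F) (pdList l₂ F) U := by
  induction hp with
  | nil => exact fun _ x _ => rfl
  | cons a hperm ih =>
    intro hl
    rename_i t₁ t₂
    have hl' : ((t₁.length : ℕ) : WithTop ℕ∞) ≤ N := by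
      refine le_trans ?_ hl
      exact_mod_cast Nat.le_succ t₁.length
    exact pd_eqOn hU (ih hl') a
  | swap a b l =>
    intro hl
    simp only [pdList_cons]
    have h2 : ContDiffOn ℝ (2:ℕ) (pdList l F) U := by
      refine pdList_contDiffOn hU hF l 2 (le_trans ?_ hl)
      exact_mod_cast le_of_eq (by simp [List.length_cons]; omega)
    exact pd_comm hU (by exact_mod_cast h2) b a
  | trans h1 h2 ih1 ih2 =>
    intro hl
    refine (ih1 hl).trans (ih2 ?_)
    rwa [← h1.length_eq]


lemma mild_bound {r : ℕ∞} {U : Set (Fin m → ℝ)} {h : (Fin m → ℝ) → ℝ} {A B C : ℝ}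
    (hU : IsOpen U) (hmild : IsMildUpTo U h A B C r)
    {p : (Fin m → ℝ) → FormalMultilinearSeries ℝ (Fin m → ℝ) ℝ}
    (hp : HasFTaylorSeriesUpToOn r h p U)
    (k : ℕ) (a : Fin k → Fin m) (hk : (k : ℕ∞) ≤ r) {x : Fin m → ℝ} (hx : x ∈ U) :
    |p x k (fun j => Pi.single (a j) 1)| ≤ B * A ^ k * (Nat.factorial k : ℝ) ^ (1 + C) := by
  classical
  have hkW : (k : WithTop ℕ∞) ≤ (r : WithTop ℕ∞) := by exact_mod_cast hk
  have h1 : pdList (List.ofFn a) h x = p x k (fun j => Pi.single (a j) 1) :=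
    taylor_pdList hU hp k a hkW x hx
  set ν : Fin m → ℕ := fun i => (List.ofFn a).count i with hν
  have hsum : ∑ i, ν i = k := by
    rw [hν]
    simpa [List.length_ofFn] using sum_count (List.ofFn a)
  have hperm : (canon ν).Perm (List.ofFn a) := canon_perm _
  have hlcan : (canon ν).length = k := by rw [length_canon, hsum]
  have h2 : pdList (canon ν) h x = pdList (List.ofFn a) h x := by
    refine pdList_perm hU hmild.1 hperm ?_ hx
    rw [hlcan]; exact hkW
  have h3 : mDeriv ν h x = pdList (canon ν) h x := by rw [mDeriv_eq_pdList]
  have hb := hmild.2 ν (by rw [hsum]; exact hk) x hx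
  rw [hsum] at hb
  rw [← h1, ← h2, ← h3]
  exact hb

lemma vec_expand (v : Fin m → ℝ) : v = ∑ j, v j • (Pi.single j (1:ℝ) : Fin m → ℝ) := by
  classical
  funext t
  rw [Finset.sum_apply]
  simp only [Pi.smul_apply, Pi.single_apply, smul_eq_mul, mul_ite, mul_one, mul_zero]
  rw [Finset.sum_ite_eq Finset.univ t (fun j => v j)]
  simp

lemma taylorComp_bound {r : ℕ∞} {U V : Set (Fin m → ℝ)} (hU : IsOpen U) (hV : IsOpen V)
    {f : (Fin m → ℝ) → ℝ} {g : (Fin m → ℝ) → (Fin m → ℝ)}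
    {Af Bf Ag Bg C : ℝ}
    (hAf : 0 < Af) (hBf : 0 < Bf) (hAg : 0 < Ag) (hBg : 0 < Bg) (hC : 0 ≤ C)
    (hgU : Set.MapsTo g U V)
    (hf : IsMildUpTo V f Af Bf C r)
    (hg : ∀ i : Fin m, IsMildUpTo U (fun x => g x i) Ag Bg C r)
    {x : Fin m → ℝ} (hx : x ∈ U)
    (k : ℕ) (hk : (k : ℕ∞) ≤ r) (a : Fin k → Fin m) :
    |((ftaylorSeriesWithin ℝ f V (g x)).taylorComp (ftaylorSeriesWithin ℝ g U x)) k
        (fun j => Pi.single (a j) 1)|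
      ≤ Bf * (Ag * ((m : ℝ) * Bg * Af + 1) ^ (1 + C)) ^ k
          * (Nat.factorial k : ℝ) ^ (1 + C) := by
  classical
  set t : ℝ := (m:ℝ) * Bg * Af with hts
  have ht0 : 0 ≤ t := by positivity
  have ht1 : (1:ℝ) ≤ t + 1 := by linarith
  have hgall : ContDiffOn ℝ r g U := contDiffOn_pi.2 fun i => (hg i).1
  have HTg : HasFTaylorSeriesUpToOn r g (ftaylorSeriesWithin ℝ g U) U :=
    hgall.ftaylorSeriesWithin hU.uniqueDiffOn
  have HTf : HasFTaylorSeriesUpToOn r f (ftaylorSeriesWithin ℝ f V) V :=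
    hf.1.ftaylorSeriesWithin hV.uniqueDiffOn
  set qf := ftaylorSeriesWithin ℝ f V with hqf
  set Pg := ftaylorSeriesWithin ℝ g U with hPg
  rw [FormalMultilinearSeries.taylorComp, ContinuousMultilinearMap.sum_apply]
  refine (Finset.abs_sum_le_sum_abs _ _).trans ?_
  have percbound : ∀ c : OrderedFinpartition k,
      |((qf (g x)).compAlongOrderedFinpartition (Pg x) c) (fun j => Pi.single (a j) 1)|
        ≤ (Bf * Ag ^ k * (Nat.factorial k : ℝ) ^ C) * (t ^ c.length * (W c : ℝ)) := by
    intro c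
    set k' := c.length with hk'
    set ns : Fin k' → ℕ := c.partSize with hns
    have hk'r : (k' : ℕ∞) ≤ r := le_trans (by exact_mod_cast c.length_le) hk
    have hnsr : ∀ i, ((ns i : ℕ) : ℕ∞) ≤ r := fun i =>
      le_trans (by exact_mod_cast c.partSize_le i) hk
    set w : Fin k' → (Fin m → ℝ) :=
      fun i => Pg x (ns i) (fun s => Pi.single (a (c.emb i s)) 1) with hw
    have hval : ((qf (g x)).compAlongOrderedFinpartition (Pg x) c)
        (fun j => Pi.single (a j) 1) = qf (g x) k' w := rfl
    have hwb : ∀ i j, |w i j| ≤ Bg * Ag ^ (ns i) * (Nat.factorial (ns i) : ℝ) ^ (1 + C) := by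
      intro i j
      have HTgj : HasFTaylorSeriesUpToOn r (fun y => g y j)
          (fun y k =>
            (ContinuousLinearMap.proj j).compContinuousMultilinearMap (Pg y k)) U := by
        have h' := HTg.continuousLinearMap_comp
          (ContinuousLinearMap.proj (R := ℝ) (φ := fun _ : Fin m => ℝ) j)
        exact h'.congr fun y _ => rfl
      have hb := mild_bound hU (hg j) HTgj (ns i) (fun s => a (c.emb i s)) (hnsr i) hx
      simpa using hb
    have hqb : ∀ J : Fin k' → Fin m, |qf (g x) k' (fun i => Pi.single (J i) 1)|
        ≤ Bf * Af ^ k' * (Nat.factorial k' : ℝ) ^ (1 + C) := fun J =>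
      mild_bound hV hf HTf k' J hk'r (hgU hx)
    have hexp : qf (g x) k' w = ∑ J : Fin k' → Fin m,
        (∏ i, w i (J i)) • qf (g x) k' (fun i => Pi.single (J i) 1) := by
      have hwsum : w = fun i => ∑ j, w i j • (Pi.single j (1:ℝ) : Fin m → ℝ) :=
        funext fun i => vec_expand (w i)
      conv_lhs => rw [hwsum]
      rw [show (qf (g x) k') (fun i => ∑ j, w i j • (Pi.single j (1:ℝ) : Fin m → ℝ))
          = (qf (g x) k').toMultilinearMap
              (fun i => ∑ j, w i j • (Pi.single j (1:ℝ) : Fin m → ℝ)) from rfl]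
      rw [MultilinearMap.map_sum]
      refine Finset.sum_congr rfl fun J _ => ?_
      exact MultilinearMap.map_smul_univ (qf (g x) k').toMultilinearMap
        (fun i => w i (J i)) (fun i => Pi.single (J i) 1)
    rw [hval, hexp]
    refine (Finset.abs_sum_le_sum_abs _ _).trans ?_
    have hterm : ∀ J : Fin k' → Fin m,
        |(∏ i, w i (J i)) • qf (g x) k' (fun i => Pi.single (J i) 1)|
        ≤ (∏ i, (Bg * Ag ^ (ns i) * (Nat.factorial (ns i) : ℝ) ^ (1 + C)))
            * (Bf * Af ^ k' * (Nat.factorial k' : ℝ) ^ (1 + C)) := by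
      intro J
      rw [smul_eq_mul, abs_mul, abs_prod]
      refine mul_le_mul ?_ (hqb J) (abs_nonneg _) (Finset.prod_nonneg fun i _ => ?_)
      · exact Finset.prod_le_prod (fun i _ => abs_nonneg _) (fun i _ => hwb i (J i))
      · positivity
    refine (Finset.sum_le_sum fun J _ => hterm J).trans ?_
    rw [Finset.sum_const, Finset.card_univ, nsmul_eq_mul]
    have hcard : (Fintype.card (Fin k' → Fin m) : ℝ) = (m:ℝ)^k' := by
      rw [Fintype.card_fun, Fintype.card_fin, Fintype.card_fin]
      push_cast
      rfl
    rw [hcard]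
    have hP : (∏ i, (Bg * Ag ^ (ns i) * ((Nat.factorial (ns i)) : ℝ) ^ (1 + C)))
        = Bg ^ k' * Ag ^ k
          * (((∏ i, Nat.factorial (ns i)) : ℕ) : ℝ) ^ (1 + C) := by
      rw [Finset.prod_mul_distrib, Finset.prod_mul_distrib]
      congr 1
      · congr 1
        · rw [Finset.prod_const, Finset.card_univ, Fintype.card_fin]
        · rw [Finset.prod_pow_eq_pow_sum]
          congr 1
          exact sum_partSize c
      · rw [Nat.cast_prod]
        exact Real.finset_prod_rpow _ _ (fun i _ => by positivity) _
    have hQP : ((Nat.factorial k' : ℝ) ^ (1+C))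
          * ((((∏ i, Nat.factorial (ns i)) : ℕ) : ℝ) ^ (1+C))
        = ((W c : ℕ) : ℝ) ^ (1+C) := by
      rw [← Real.mul_rpow (by positivity) (by positivity)]
      congr 1
      rw [W]
      push_cast
      rfl
    have hWpos : (0:ℝ) < (W c : ℝ) := by
      have := one_le_W c
      exact_mod_cast lt_of_lt_of_le Nat.zero_lt_one this
    have hWle : ((W c : ℕ) : ℝ) ^ (1+C) ≤ (W c : ℝ) * (Nat.factorial k : ℝ) ^ C := by
      rw [Real.rpow_add hWpos, Real.rpow_one]
      refine mul_le_mul_of_nonneg_left ?_ (le_of_lt hWpos)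
      exact Real.rpow_le_rpow (by positivity) (by exact_mod_cast W_le_factorial c) hC
    rw [hP]
    calc (m:ℝ)^k' * (Bg ^ k' * Ag ^ k
          * (((∏ i, Nat.factorial (ns i)) : ℕ) : ℝ) ^ (1 + C)
          * (Bf * Af ^ k' * (Nat.factorial k' : ℝ) ^ (1 + C)))
        = (t ^ k') * Ag ^ k * Bf * (((Nat.factorial k' : ℝ) ^ (1+C))
            * ((((∏ i, Nat.factorial (ns i)) : ℕ) : ℝ) ^ (1+C))) := by
          rw [hts]; ring
      _ = (t ^ k') * Ag ^ k * Bf * (((W c : ℕ) : ℝ) ^ (1+C)) := by rw [hQP]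
      _ ≤ (t ^ k') * Ag ^ k * Bf * ((W c : ℝ) * (Nat.factorial k : ℝ) ^ C) := by
          refine mul_le_mul_of_nonneg_left hWle ?_
          positivity
      _ = (Bf * Ag ^ k * (Nat.factorial k : ℝ) ^ C) * (t ^ k' * (W c : ℝ)) := by ring
  refine (Finset.sum_le_sum fun c _ => percbound c).trans ?_
  rw [← Finset.mul_sum]
  have hsum := sum_W_le k ht0
  have hbase : (1+t) ≤ (t+1) ^ (1+C) := by
    have h := Real.rpow_le_rpow_of_exponent_le ht1 (by linarith : (1:ℝ) ≤ 1 + C)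
    rw [Real.rpow_one] at h
    linarith
  have hpow : (1+t)^k ≤ ((t+1)^(1+C))^k := pow_le_pow_left₀ (by linarith) hbase k
  have hfact : (Nat.factorial k : ℝ) ^ (1+C)
      = (Nat.factorial k : ℝ) * (Nat.factorial k : ℝ)^C := by
    rw [Real.rpow_add (by positivity), Real.rpow_one]
  calc (Bf * Ag ^ k * (Nat.factorial k:ℝ)^C)
        * (∑ c : OrderedFinpartition k, t ^ c.length * (W c : ℝ))
      ≤ (Bf * Ag ^ k * (Nat.factorial k:ℝ)^C) * ((Nat.factorial k:ℝ) * (1+t)^k) := by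
        refine mul_le_mul_of_nonneg_left hsum ?_
        positivity
    _ = (Bf * Ag^k * ((Nat.factorial k:ℝ) * (Nat.factorial k:ℝ)^C)) * (1+t)^k := by ring
    _ ≤ (Bf * Ag^k * ((Nat.factorial k:ℝ) * (Nat.factorial k:ℝ)^C)) * ((t+1)^(1+C))^k := by
        refine mul_le_mul_of_nonneg_left hpow ?_
        positivity
    _ = Bf * (Ag * ((m : ℝ) * Bg * Af + 1) ^ (1 + C)) ^ k
          * (Nat.factorial k : ℝ) ^ (1 + C) := by
        rw [hfact, mul_pow, ← hts]
        ring

end Calculus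

end MildComp

theorem mild_comp {m : ℕ} {U V : Set (Fin m → ℝ)} (hU : IsOpen U) (hV : IsOpen V)
    {f : (Fin m → ℝ) → ℝ} {g : (Fin m → ℝ) → (Fin m → ℝ)}
    {Af Bf Ag Bg C : ℝ} {r : ℕ∞}
    (hAf : 0 < Af) (hBf : 0 < Bf) (hAg : 0 < Ag) (hBg : 0 < Bg) (hC : 0 ≤ C)
    (hgU : Set.MapsTo g U V)
    (hf : IsMildUpTo V f Af Bf C r)
    (hg : ∀ i : Fin m, IsMildUpTo U (fun x => g x i) Ag Bg C r) :
    IsMildUpTo U (f ∘ g) (Ag * (m * Bg * Af + 1) ^ (1 + C)) Bf C r := by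
  classical
  have hgall : ContDiffOn ℝ r g U := contDiffOn_pi.2 fun i => (hg i).1
  have HTg := hgall.ftaylorSeriesWithin hU.uniqueDiffOn
  have HTf := hf.1.ftaylorSeriesWithin hV.uniqueDiffOn
  have HTc : HasFTaylorSeriesUpToOn r (f ∘ g)
      (fun y => ((ftaylorSeriesWithin ℝ f V) (g y)).taylorComp
        ((ftaylorSeriesWithin ℝ g U) y)) U :=
    HTf.comp HTg hgU
  constructor
  · exact hf.1.comp hgall hgU
  · intro ν hν x hx
    have hlen : (MildComp.canon ν).length = ∑ i, ν i := MildComp.length_canon ν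
    have hkr : (((MildComp.canon ν).length : ℕ) : ℕ∞) ≤ r := by rw [hlen]; exact hν
    have e1 : mDeriv ν (f ∘ g) x = MildComp.pdList (MildComp.canon ν) (f ∘ g) x := by
      rw [MildComp.mDeriv_eq_pdList]
    have e2 : MildComp.pdList (MildComp.canon ν) (f ∘ g) x
        = MildComp.pdList (List.ofFn (MildComp.canon ν).get) (f ∘ g) x := by
      rw [List.ofFn_get]
    have e3 := MildComp.taylor_pdList hU HTc (MildComp.canon ν).length (MildComp.canon ν).get
      (by exact_mod_cast hkr) x hx
    have hb := MildComp.taylorComp_bound hU hV hAf hBf hAg hBg hC hgU hf hg hx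
      (MildComp.canon ν).length hkr (MildComp.canon ν).get
    rw [e1, e2, e3, ← hlen]
    exact hb
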